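/- Let t ↦ (φ(t), θ(t), ψ(t)) be a differentiable curve with γ(t) := (sin θ(t) sin ψ(t), sin θ(t) cos ψ(t), cos θ(t)) ≠ 0 for all t, and set g(t) = g(φ(t), θ(t), ψ(t)). Then the third component of the rolling constraint is holonomic: d/dt ( −⟨r(γ(t)), γ(t)⟩ ) = −( g′(t) · r(γ(t)) )₃, i.e. the function z(t) = −⟨r(γ(t)), γ(t)⟩ satisfies z′ = −(g′ r)·e₃. -/

import Mathlib

open Real Matrix

/-- Euler-angle matrix in the `x`-convention. -/
noncomputable def eulerMatrix (φ θ ψ : ℝ) : Matrix (Fin 3) (Fin 3) ℝ :=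
  !![cos ψ * cos φ - cos θ * sin φ * sin ψ,
     -sin ψ * cos φ - cos θ * sin φ * cos ψ,
     sin θ * sin φ;
     cos ψ * sin φ + cos θ * cos φ * sin ψ,
     -sin ψ * sin φ + cos θ * cos φ * cos ψ,
     -sin θ * cos φ;
     sin θ * sin ψ, sin θ * cos ψ, cos θ]

/-- The contact point vector `r(γ)` of the ellipsoid with semi-axes `a, b, c`. -/
noncomputable def contactPoint (a b c : ℝ) (γ : Fin 3 → ℝ) : Fin 3 → ℝ :=
  ![-(a ^ 2 * γ 0) / Real.sqrt (a ^ 2 * γ 0 ^ 2 + b ^ 2 * γ 1 ^ 2 + c ^ 2 * γ 2 ^ 2),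
    -(b ^ 2 * γ 1) / Real.sqrt (a ^ 2 * γ 0 ^ 2 + b ^ 2 * γ 1 ^ 2 + c ^ 2 * γ 2 ^ 2),
    -(c ^ 2 * γ 2) / Real.sqrt (a ^ 2 * γ 0 ^ 2 + b ^ 2 * γ 1 ^ 2 + c ^ 2 * γ 2 ^ 2)]

/-- For a differentiable curve of Euler angles, the third component of the rolling
constraint is holonomic: the height `z(t) = −⟨r(γ(t)), γ(t)⟩` satisfies
`z′(t) = −(g′(t) · r(γ(t)))₃`. -/
theorem third_rolling_constraint_holonomic (a b c : ℝ) (ha : 0 < a) (hb : 0 < b)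
    (hc : 0 < c) (φ θ ψ : ℝ → ℝ)
    (hφ : Differentiable ℝ φ) (hθ : Differentiable ℝ θ) (hψ : Differentiable ℝ ψ)
    (γ : ℝ → Fin 3 → ℝ)
    (hγ : ∀ t, γ t = ![sin (θ t) * sin (ψ t), sin (θ t) * cos (ψ t), cos (θ t)])
    (hγ0 : ∀ t, γ t ≠ 0) (t : ℝ) :
    deriv (fun s => -(contactPoint a b c (γ s) ⬝ᵥ γ s)) t =
      -((Matrix.of fun i j => deriv (fun s => eulerMatrix (φ s) (θ s) (ψ s) i j) t).mulVec
          (contactPoint a b c (γ t)) 2) := by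
  have hfpos : ∀ s : ℝ, 0 < a ^ 2 * (Real.sin (θ s) * Real.sin (ψ s)) ^ 2 +
      b ^ 2 * (Real.sin (θ s) * Real.cos (ψ s)) ^ 2 + c ^ 2 * Real.cos (θ s) ^ 2 := by
    intro s
    have h1 : Real.sin (ψ s) ^ 2 + Real.cos (ψ s) ^ 2 = 1 := Real.sin_sq_add_cos_sq _
    have h2 : Real.sin (θ s) ^ 2 + Real.cos (θ s) ^ 2 = 1 := Real.sin_sq_add_cos_sq _
    have hsum : (Real.sin (θ s) * Real.sin (ψ s)) ^ 2 +
        (Real.sin (θ s) * Real.cos (ψ s)) ^ 2 + Real.cos (θ s) ^ 2 = 1 := by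
      nlinarith [h1, h2]
    have hm : 0 < min (a ^ 2) (min (b ^ 2) (c ^ 2)) := by positivity
    have hma : min (a ^ 2) (min (b ^ 2) (c ^ 2)) ≤ a ^ 2 := min_le_left _ _
    have hmb : min (a ^ 2) (min (b ^ 2) (c ^ 2)) ≤ b ^ 2 :=
      le_trans (min_le_right _ _) (min_le_left _ _)
    have hmc : min (a ^ 2) (min (b ^ 2) (c ^ 2)) ≤ c ^ 2 :=
      le_trans (min_le_right _ _) (min_le_right _ _)
    nlinarith [mul_nonneg (sub_nonneg.2 hma) (sq_nonneg (Real.sin (θ s) * Real.sin (ψ s))),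
      mul_nonneg (sub_nonneg.2 hmb) (sq_nonneg (Real.sin (θ s) * Real.cos (ψ s))),
      mul_nonneg (sub_nonneg.2 hmc) (sq_nonneg (Real.cos (θ s))), hsum, hm]
  have hθd : HasDerivAt θ (deriv θ t) t := (hθ t).hasDerivAt
  have hψd : HasDerivAt ψ (deriv ψ t) t := (hψ t).hasDerivAt
  have hsθ : HasDerivAt (fun s => Real.sin (θ s)) (Real.cos (θ t) * deriv θ t) t :=
    (Real.hasDerivAt_sin (θ t)).comp t hθd
  have hcθ : HasDerivAt (fun s => Real.cos (θ s)) (-Real.sin (θ t) * deriv θ t) t :=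
    (Real.hasDerivAt_cos (θ t)).comp t hθd
  have hsψ : HasDerivAt (fun s => Real.sin (ψ s)) (Real.cos (ψ t) * deriv ψ t) t :=
    (Real.hasDerivAt_sin (ψ t)).comp t hψd
  have hcψ : HasDerivAt (fun s => Real.cos (ψ s)) (-Real.sin (ψ t) * deriv ψ t) t :=
    (Real.hasDerivAt_cos (ψ t)).comp t hψd
  have g1 : HasDerivAt (fun s => Real.sin (θ s) * Real.sin (ψ s))
      (Real.cos (θ t) * deriv θ t * Real.sin (ψ t) +
        Real.sin (θ t) * (Real.cos (ψ t) * deriv ψ t)) t := hsθ.mul hsψ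
  have g2 : HasDerivAt (fun s => Real.sin (θ s) * Real.cos (ψ s))
      (Real.cos (θ t) * deriv θ t * Real.cos (ψ t) +
        Real.sin (θ t) * (-Real.sin (ψ t) * deriv ψ t)) t := hsθ.mul hcψ
  have hf : HasDerivAt (fun s => a ^ 2 * (Real.sin (θ s) * Real.sin (ψ s)) ^ 2 +
      b ^ 2 * (Real.sin (θ s) * Real.cos (ψ s)) ^ 2 + c ^ 2 * Real.cos (θ s) ^ 2)
      (a ^ 2 * ((2 : ℕ) * (Real.sin (θ t) * Real.sin (ψ t)) ^ 1 *
        (Real.cos (θ t) * deriv θ t * Real.sin (ψ t) +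
          Real.sin (θ t) * (Real.cos (ψ t) * deriv ψ t))) +
       b ^ 2 * ((2 : ℕ) * (Real.sin (θ t) * Real.cos (ψ t)) ^ 1 *
        (Real.cos (θ t) * deriv θ t * Real.cos (ψ t) +
          Real.sin (θ t) * (-Real.sin (ψ t) * deriv ψ t))) +
       c ^ 2 * ((2 : ℕ) * Real.cos (θ t) ^ 1 * (-Real.sin (θ t) * deriv θ t))) t :=
    (((g1.pow 2).const_mul (a ^ 2)).add ((g2.pow 2).const_mul (b ^ 2))).add
      ((hcθ.pow 2).const_mul (c ^ 2))
  have hz : (fun s => -(contactPoint a b c (γ s) ⬝ᵥ γ s)) = fun s =>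
      Real.sqrt (a ^ 2 * (Real.sin (θ s) * Real.sin (ψ s)) ^ 2 +
        b ^ 2 * (Real.sin (θ s) * Real.cos (ψ s)) ^ 2 + c ^ 2 * Real.cos (θ s) ^ 2) := by
    funext s
    have hfs := hfpos s
    have hsq : Real.sqrt (a ^ 2 * (Real.sin (θ s) * Real.sin (ψ s)) ^ 2 +
        b ^ 2 * (Real.sin (θ s) * Real.cos (ψ s)) ^ 2 + c ^ 2 * Real.cos (θ s) ^ 2) ≠ 0 :=
      ne_of_gt (Real.sqrt_pos.mpr hfs)
    rw [hγ s]
    simp only [contactPoint, dotProduct, Fin.sum_univ_three, Matrix.cons_val_zero,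
      Matrix.cons_val_one, Matrix.head_cons, Matrix.cons_val_two, Matrix.tail_cons]
    simp only [div_mul_eq_mul_div, ← add_div]
    rw [← neg_div]
    conv_rhs => rw [← Real.div_sqrt (x := a ^ 2 * (Real.sin (θ s) * Real.sin (ψ s)) ^ 2 +
        b ^ 2 * (Real.sin (θ s) * Real.cos (ψ s)) ^ 2 + c ^ 2 * Real.cos (θ s) ^ 2)]
    congr 1
    ring
  rw [hz]
  have hfs := hfpos t
  have hsq : Real.sqrt (a ^ 2 * (Real.sin (θ t) * Real.sin (ψ t)) ^ 2 +
      b ^ 2 * (Real.sin (θ t) * Real.cos (ψ t)) ^ 2 + c ^ 2 * Real.cos (θ t) ^ 2) ≠ 0 :=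
    ne_of_gt (Real.sqrt_pos.mpr hfs)
  rw [(hf.sqrt (ne_of_gt hfs)).deriv]
  have hγt := hγ t
  simp only [eulerMatrix, Matrix.mulVec, dotProduct, Fin.sum_univ_three, Matrix.of_apply,
    Matrix.cons_val_zero, Matrix.cons_val_one, Matrix.head_cons, Matrix.cons_val_two,
    Matrix.tail_cons, Matrix.cons_val', Matrix.empty_val', Matrix.cons_val_fin_one,
    Matrix.head_fin_const, contactPoint, hγt]
  rw [g1.deriv, g2.deriv, hcθ.deriv]
  simp only [← mul_div_assoc, ← add_div]
  rw [← neg_div, div_eq_div_iff (by positivity) hsq]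
  ring
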